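/- Fix reals c₁ ≥ c₂ ≥ ... ≥ c_m ≥ 0 and probabilities p₁, ..., p_m ∈ [0,1] with Σ_s p_s ≥ 1. Let b = min{a : Σ_{s=1}^a p_s ≥ 1} and B̄ = c_b. Define f(B) = B + Σ_{s=1}^m p_s · (c_s - B)⁺. Then for every ε > 0, f(B̄ - ε) ≥ f(B̄). -/
import Mathlib


theorem truncation_threshold_decrease {m : ℕ} (p c : Fin m → ℝ) (b : Fin m)
    (hp0 : ∀ s, 0 ≤ p s) (hp1 : ∀ s, p s ≤ 1)
    (hc : ∀ s t : Fin m, s ≤ t → c t ≤ c s) (hc0 : ∀ s, 0 ≤ c s)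
    (hb : 1 ≤ ∑ s ∈ Finset.univ.filter (fun s => s ≤ b), p s)
    (hbmin : ∀ a : Fin m, a < b →
      ∑ s ∈ Finset.univ.filter (fun s => s ≤ a), p s < 1)
    (ε : ℝ) (hε : 0 < ε) :
    (c b - ε) + ∑ s, p s * max (c s - (c b - ε)) 0 ≥
      (c b) + ∑ s, p s * max (c s - c b) 0 := by
  have key : ε ≤ ∑ s, p s * (max (c s - (c b - ε)) 0 - max (c s - c b) 0) := by
    have h1 : ∑ s ∈ Finset.univ.filter (fun s => s ≤ b),
        p s * (max (c s - (c b - ε)) 0 - max (c s - c b) 0)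
        ≤ ∑ s, p s * (max (c s - (c b - ε)) 0 - max (c s - c b) 0) := by
      apply Finset.sum_le_sum_of_subset_of_nonneg (Finset.filter_subset _ _)
      intro s _ _
      have : max (c s - c b) 0 ≤ max (c s - (c b - ε)) 0 := by
        apply max_le_max _ le_rfl; linarith
      have := hp0 s
      nlinarith
    have h2 : ∑ s ∈ Finset.univ.filter (fun s => s ≤ b),
        p s * (max (c s - (c b - ε)) 0 - max (c s - c b) 0)
        = ε * ∑ s ∈ Finset.univ.filter (fun s => s ≤ b), p s := by
      rw [Finset.mul_sum]
      apply Finset.sum_congr rfl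
      intro s hs
      have hsb : s ≤ b := by simpa using hs
      have hcb : c b ≤ c s := hc s b hsb
      rw [max_eq_left (by linarith), max_eq_left (by linarith)]
      ring
    have h3 : ε ≤ ε * ∑ s ∈ Finset.univ.filter (fun s => s ≤ b), p s := by
      nlinarith
    linarith
  have hsplit : ∑ s, p s * (max (c s - (c b - ε)) 0 - max (c s - c b) 0)
      = (∑ s, p s * max (c s - (c b - ε)) 0) - ∑ s, p s * max (c s - c b) 0 := by
    rw [← Finset.sum_sub_distrib]
    apply Finset.sum_congr rfl
    intro s _; ring
  linarith [key, hsplit.symm ▸ key]
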